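/- (Sublinear convergence rate.) Suppose W satisfies w_{ij} = 1 for all j ≥ i, U := W − euᵀ is symmetric for some u ∈ ℝ^m, β ≥ ρ > 0, α ≥ 1, P̂ := P − D_Hᵀ((W − euᵀ + αuuᵀ) ⊗ I)D_H − β D_Aᵀ((W − euᵀ + αuuᵀ) ⊗ I)D_A is positive semidefinite, the sequence {(x^k, λ^k)}_{k≥1} is generated by the algorithm with λ^1 = 0, and (x*, λ*) satisfies the KKT conditions. Let x̄^{t+1} := (1/t) Σ_{k=1}^t x^{k+1} and C := (1/ρ) max{(1 + ‖λ*‖)², 4‖λ*‖²} + ‖x^1 − x*‖_P² − ‖y^1 − y*‖_V² − β‖z^1 − z*‖_V². Then for every t ≥ 1: |F(x̄^{t+1}) − F(x*)| ≤ C/(2t) and ‖Ax̄^{t+1} − b‖ ≤ C/(2t). -/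

import Mathlib

open Matrix Finset Filter Topology

/-- For a block matrix `M = (M_1,…,M_m)` and a block vector `x = (x_1,…,x_m)`,
`blkMulVec M x = Σ_i M_i x_i` (i.e. `Mx` for the concatenated matrix/vector). -/
noncomputable def blkMulVec {m r : ℕ} {n : Fin m → ℕ}
    (M : ∀ i : Fin m, Matrix (Fin r) (Fin (n i)) ℝ)
    (x : ∀ i : Fin m, Fin (n i) → ℝ) : Fin r → ℝ :=
  ∑ i, M i *ᵥ x i

/-- The objective `F(x) = (1/2) xᵀQx + Σ_i g_i(x_i)` where `Q = HᵀH`,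
so `F(x) = (1/2)‖Hx‖² + Σ_i g_i(x_i)`. -/
noncomputable def Fobj {m q : ℕ} {n : Fin m → ℕ}
    (H : ∀ i : Fin m, Matrix (Fin q) (Fin (n i)) ℝ)
    (g : ∀ i : Fin m, (Fin (n i) → ℝ) → ℝ)
    (x : ∀ i : Fin m, Fin (n i) → ℝ) : ℝ :=
  (1 / 2) * (blkMulVec H x ⬝ᵥ blkMulVec H x) + ∑ i, g i (x i)

/-- `‖x‖_P²` for the block-diagonal matrix `P = blkdiag(P_1,…,P_m)`:
`‖x‖_P² = Σ_i x_iᵀ P_i x_i`. -/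
noncomputable def normPSq {m : ℕ} {n : Fin m → ℕ}
    (P : ∀ i : Fin m, Matrix (Fin (n i)) (Fin (n i)) ℝ)
    (x : ∀ i : Fin m, Fin (n i) → ℝ) : ℝ :=
  ∑ i, x i ⬝ᵥ (P i *ᵥ x i)

/-- `‖y‖_V²` for a block vector `y = (y_1,…,y_m)`, where `V = U ⊗ I` with
`U := W − euᵀ` (so `U_{ij} = W_{ij} − u_j`): `‖y‖_V² = Σ_{i,j} U_{ij} ⟨y_i, y_j⟩`. -/
noncomputable def normVSq {m r : ℕ} (W : Matrix (Fin m) (Fin m) ℝ) (u : Fin m → ℝ)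
    (y : Fin m → Fin r → ℝ) : ℝ :=
  ∑ i, ∑ j, (W i j - u j) * (y i ⬝ᵥ y j)

/-- The quadratic form `v ↦ vᵀ D_Bᵀ (M ⊗ I) D_B v = Σ_{i,j} M_{ij} ⟨B_i v_i, B_j v_j⟩`
for a block-diagonal matrix `D_B = blkdiag(B_1,…,B_m)` and `M ∈ ℝ^{m×m}`. -/
noncomputable def quadKron {m r : ℕ} {n : Fin m → ℕ} (M : Matrix (Fin m) (Fin m) ℝ)
    (B : ∀ i : Fin m, Matrix (Fin r) (Fin (n i)) ℝ)
    (v : ∀ i : Fin m, Fin (n i) → ℝ) : ℝ :=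
  ∑ i, ∑ j, M i j * ((B i *ᵥ v i) ⬝ᵥ (B j *ᵥ v j))

/-- The point `x̂^{k,i}` with blocks `x̂_j^{k,i} = x_j^{k+1} − w_{ij}(x_j^{k+1} − x_j^k)`. -/
noncomputable def xhat {m : ℕ} {n : Fin m → ℕ} (W : Matrix (Fin m) (Fin m) ℝ)
    (xk xk1 : ∀ i : Fin m, Fin (n i) → ℝ) (i : Fin m) :
    ∀ j : Fin m, Fin (n j) → ℝ :=
  fun j => xk1 j - W i j • (xk1 j - xk j)

/-- One iteration of the hybrid Jacobian/Gauss-Seidel proximal BCU method: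
for each `i`, `x_i^{k+1}` minimizes
`⟨∇_i f(x̂^{k,i}) − A_iᵀ(λ^k − β(Ax̂^{k,i} − b)), x_i⟩ + g_i(x_i) + (1/2)‖x_i − x_i^k‖_{P_i}²`
(where `f(x) = (1/2)‖Hx‖²`, so `∇_i f(x̂) = H_iᵀ(Hx̂)`), and
`λ^{k+1} = λ^k − ρ(Ax^{k+1} − b)`. -/
noncomputable def Iter {m q p : ℕ} {n : Fin m → ℕ}
    (H : ∀ i : Fin m, Matrix (Fin q) (Fin (n i)) ℝ)
    (A : ∀ i : Fin m, Matrix (Fin p) (Fin (n i)) ℝ)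
    (b : Fin p → ℝ)
    (g : ∀ i : Fin m, (Fin (n i) → ℝ) → ℝ)
    (P : ∀ i : Fin m, Matrix (Fin (n i)) (Fin (n i)) ℝ)
    (W : Matrix (Fin m) (Fin m) ℝ)
    (β ρ : ℝ)
    (xk xk1 : ∀ i : Fin m, Fin (n i) → ℝ)
    (lamk lamk1 : Fin p → ℝ) : Prop :=
  (∀ i : Fin m, ∀ ξ : Fin (n i) → ℝ,
      ((H i)ᵀ *ᵥ blkMulVec H (xhat W xk xk1 i)
          - (A i)ᵀ *ᵥ (lamk - β • (blkMulVec A (xhat W xk xk1 i) - b))) ⬝ᵥ xk1 i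
        + g i (xk1 i)
        + (1 / 2) * ((xk1 i - xk i) ⬝ᵥ (P i *ᵥ (xk1 i - xk i)))
      ≤ ((H i)ᵀ *ᵥ blkMulVec H (xhat W xk xk1 i)
          - (A i)ᵀ *ᵥ (lamk - β • (blkMulVec A (xhat W xk xk1 i) - b))) ⬝ᵥ ξ
        + g i ξ
        + (1 / 2) * ((ξ - xk i) ⬝ᵥ (P i *ᵥ (ξ - xk i))))
  ∧ lamk1 = lamk - ρ • (blkMulVec A xk1 - b)

/-- Euclidean norm of a vector. -/
noncomputable def enormE {r : ℕ} (v : Fin r → ℝ) : ℝ := Real.sqrt (v ⬝ᵥ v)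

section dotHelpers
open Matrix Finset
variable {r : ℕ}

lemma sum_dot' {ι : Type*} (s : Finset ι) (f : ι → Fin r → ℝ) (w : Fin r → ℝ) :
    (∑ i ∈ s, f i) ⬝ᵥ w = ∑ i ∈ s, f i ⬝ᵥ w := by
  simp only [dotProduct, Finset.sum_apply, Finset.sum_mul]
  exact Finset.sum_comm

lemma dot_sum' {ι : Type*} (s : Finset ι) (f : ι → Fin r → ℝ) (w : Fin r → ℝ) :
    w ⬝ᵥ (∑ i ∈ s, f i) = ∑ i ∈ s, w ⬝ᵥ f i := by
  simp only [dotProduct, Finset.sum_apply, Finset.mul_sum]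
  exact Finset.sum_comm

lemma dot_self_nonneg' (v : Fin r → ℝ) : 0 ≤ v ⬝ᵥ v :=
  Finset.sum_nonneg fun i _ => mul_self_nonneg _

lemma tdot {s : ℕ} (M : Matrix (Fin r) (Fin s) ℝ) (w : Fin r → ℝ) (v : Fin s → ℝ) :
    (Mᵀ *ᵥ w) ⬝ᵥ v = w ⬝ᵥ (M *ᵥ v) := by
  rw [Matrix.mulVec_transpose, Matrix.dotProduct_mulVec]

lemma symdot (P : Matrix (Fin r) (Fin r) ℝ) (hPs : Pᵀ = P) (v w : Fin r → ℝ) :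
    v ⬝ᵥ (P *ᵥ w) = w ⬝ᵥ (P *ᵥ v) := by
  rw [Matrix.dotProduct_mulVec, ← Matrix.mulVec_transpose, hPs]
  exact dotProduct_comm _ _

lemma yng (p s : Fin r → ℝ) : p ⬝ᵥ s ≤ (1/2) * (s ⬝ᵥ s) + (1/2) * (p ⬝ᵥ p) := by
  have h := dot_self_nonneg' (p - s)
  have e : (p - s) ⬝ᵥ (p - s) = p ⬝ᵥ p - p ⬝ᵥ s - p ⬝ᵥ s + s ⬝ᵥ s := by
    simp only [sub_dotProduct, dotProduct_sub]
    rw [dotProduct_comm s p]; ring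
  nlinarith

lemma aux_theta {c d e : ℝ} (he : 0 ≤ e) (h : ∀ θ : ℝ, 0 < θ → θ ≤ 1 → c ≤ d + θ * e) :
    c ≤ d := by
  by_contra h'
  push_neg at h'
  have hθpos : 0 < min 1 ((c - d) / (2 * (e + 1))) := by
    apply lt_min one_pos
    apply div_pos (by linarith) (by linarith)
  have h2 := h _ hθpos (min_le_left _ _)
  have h3 : min 1 ((c - d) / (2 * (e + 1))) ≤ (c - d) / (2 * (e + 1)) := min_le_right _ _
  have h4 : min 1 ((c - d) / (2 * (e + 1))) * e ≤ (c - d) / (2 * (e + 1)) * e :=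
    mul_le_mul_of_nonneg_right h3 he
  have h5 : (c - d) / (2 * (e + 1)) * e < c - d := by
    rw [div_mul_eq_mul_div, div_lt_iff₀ (by linarith)]
    nlinarith
  linarith

lemma cs_dot (v w : Fin r → ℝ) : v ⬝ᵥ w ≤ Real.sqrt (v ⬝ᵥ v) * Real.sqrt (w ⬝ᵥ w) := by
  have h := Finset.sum_mul_sq_le_sq_mul_sq Finset.univ v w
  have h1 : v ⬝ᵥ w ≤ Real.sqrt ((v ⬝ᵥ w) ^ 2) := by
    rw [Real.sqrt_sq_eq_abs]; exact le_abs_self _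
  have h2 : Real.sqrt ((v ⬝ᵥ w) ^ 2) ≤ Real.sqrt ((v ⬝ᵥ v) * (w ⬝ᵥ w)) := by
    apply Real.sqrt_le_sqrt
    simpa [dotProduct, sq, Finset.mul_sum, Finset.sum_mul] using h
  calc v ⬝ᵥ w ≤ _ := h1
    _ ≤ _ := h2
    _ = _ := Real.sqrt_mul (dot_self_nonneg' v) _

lemma quad_exp (P : Matrix (Fin r) (Fin r) ℝ) (hPs : Pᵀ = P) (v w : Fin r → ℝ) (θ : ℝ) :
    (v + θ • w) ⬝ᵥ (P *ᵥ (v + θ • w))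
      = v ⬝ᵥ (P *ᵥ v) + 2 * θ * (v ⬝ᵥ (P *ᵥ w)) + θ ^ 2 * (w ⬝ᵥ (P *ᵥ w)) := by
  rw [Matrix.mulVec_add, Matrix.mulVec_smul]
  simp only [dotProduct_add, add_dotProduct, dotProduct_smul, smul_dotProduct, smul_eq_mul]
  rw [symdot P hPs w v]
  ring

end dotHelpers

section sums
open Matrix Finset
variable {m r : ℕ} {n : Fin m → ℕ}

lemma blkhat (H : ∀ i : Fin m, Matrix (Fin r) (Fin (n i)) ℝ)
    (W : Matrix (Fin m) (Fin m) ℝ) (x0 x1 : ∀ i : Fin m, Fin (n i) → ℝ) (i : Fin m) :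
    blkMulVec H (xhat W x0 x1 i) = blkMulVec H x1 - ∑ j, W i j • (H j *ᵥ (x1 j - x0 j)) := by
  unfold blkMulVec xhat
  rw [← Finset.sum_sub_distrib]
  apply Finset.sum_congr rfl
  intro j _
  rw [Matrix.mulVec_sub, Matrix.mulVec_smul]

lemma blk_sub (H : ∀ i : Fin m, Matrix (Fin r) (Fin (n i)) ℝ)
    (x1 xs : ∀ i : Fin m, Fin (n i) → ℝ) :
    blkMulVec H x1 - blkMulVec H xs = ∑ i, H i *ᵥ (x1 i - xs i) := by
  unfold blkMulVec
  rw [← Finset.sum_sub_distrib]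
  exact Finset.sum_congr rfl fun i _ => (Matrix.mulVec_sub _ _ _).symm

lemma swapU (W : Matrix (Fin m) (Fin m) ℝ) (u : Fin m → ℝ)
    (hU : ∀ i j : Fin m, W i j - u j = W j i - u i) (d a : Fin m → Fin r → ℝ) :
    ∑ i, ∑ j, (W i j - u j) * (d i ⬝ᵥ a j) = ∑ i, ∑ j, (W i j - u j) * (d j ⬝ᵥ a i) := by
  rw [Finset.sum_comm]
  apply Finset.sum_congr rfl; intro i _
  apply Finset.sum_congr rfl; intro j _
  rw [← hU i j]

lemma normVSq_sub (W : Matrix (Fin m) (Fin m) ℝ) (u : Fin m → ℝ)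
    (hU : ∀ i j : Fin m, W i j - u j = W j i - u i) (a d : Fin m → Fin r → ℝ) :
    normVSq W u (a - d) = normVSq W u a + normVSq W u d
      - 2 * ∑ i, ∑ j, (W i j - u j) * (d j ⬝ᵥ a i) := by
  unfold normVSq
  have e1 : ∀ i j : Fin m, (a - d) i ⬝ᵥ (a - d) j
      = a i ⬝ᵥ a j - d j ⬝ᵥ a i - d i ⬝ᵥ a j + d i ⬝ᵥ d j := by
    intro i j
    simp only [Pi.sub_apply, dotProduct_sub, sub_dotProduct]
    rw [dotProduct_comm (a i) (d j)]
    ring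
  have e2 : ∑ i, ∑ j, (W i j - u j) * ((a - d) i ⬝ᵥ (a - d) j)
      = ∑ i, ∑ j, ((W i j - u j) * (a i ⬝ᵥ a j) - (W i j - u j) * (d j ⬝ᵥ a i)
          - (W i j - u j) * (d i ⬝ᵥ a j) + (W i j - u j) * (d i ⬝ᵥ d j)) := by
    apply Finset.sum_congr rfl; intro i _
    apply Finset.sum_congr rfl; intro j _
    rw [e1]; ring
  rw [e2]
  simp only [Finset.sum_add_distrib, Finset.sum_sub_distrib]
  rw [swapU W u hU d a]
  ring

lemma usum_sq (u : Fin m → ℝ) (d : Fin m → Fin r → ℝ) :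
    (∑ j, u j • d j) ⬝ᵥ (∑ j, u j • d j) = ∑ i, ∑ j, (u i * u j) * (d i ⬝ᵥ d j) := by
  rw [sum_dot']
  apply Finset.sum_congr rfl; intro i _
  rw [smul_dotProduct, dot_sum']
  rw [smul_eq_mul, Finset.mul_sum]
  apply Finset.sum_congr rfl; intro j _
  rw [dotProduct_smul, smul_eq_mul]
  ring

lemma wsplit (W : Matrix (Fin m) (Fin m) ℝ) (u : Fin m → ℝ) (d a : Fin m → Fin r → ℝ) :
    ∑ i, ∑ j, W i j * (d j ⬝ᵥ a i)
      = (∑ i, ∑ j, (W i j - u j) * (d j ⬝ᵥ a i)) + (∑ j, u j • d j) ⬝ᵥ (∑ i, a i) := by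
  have h : (∑ j, u j • d j) ⬝ᵥ (∑ i, a i) = ∑ i, ∑ j, u j * (d j ⬝ᵥ a i) := by
    rw [dotProduct_comm, sum_dot']
    apply Finset.sum_congr rfl; intro i _
    rw [dot_sum']
    apply Finset.sum_congr rfl; intro j _
    rw [dotProduct_smul, smul_eq_mul, dotProduct_comm]
  rw [h, ← Finset.sum_add_distrib]
  apply Finset.sum_congr rfl; intro i _
  rw [← Finset.sum_add_distrib]
  apply Finset.sum_congr rfl; intro j _
  ring
end sums
section step
open Matrix Finset
variable {m q p : ℕ} {n : Fin m → ℕ}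

/-- The Lyapunov function for the per-iteration estimate. -/
noncomputable def Phi (H : ∀ i : Fin m, Matrix (Fin q) (Fin (n i)) ℝ)
    (A : ∀ i : Fin m, Matrix (Fin p) (Fin (n i)) ℝ)
    (P : ∀ i : Fin m, Matrix (Fin (n i)) (Fin (n i)) ℝ)
    (W : Matrix (Fin m) (Fin m) ℝ) (u : Fin m → ℝ) (β ρ : ℝ)
    (xstar : ∀ i : Fin m, Fin (n i) → ℝ) (lamh : Fin p → ℝ)
    (xx : ∀ i : Fin m, Fin (n i) → ℝ) (ll : Fin p → ℝ) : ℝ :=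
  normPSq P (xx - xstar)
    - normVSq W u (fun i => H i *ᵥ (xx i - xstar i))
    - β * normVSq W u (fun i => A i *ᵥ (xx i - xstar i))
    + (1 / ρ) * ((ll - lamh) ⬝ᵥ (ll - lamh))

/-- consequence of positive semidefiniteness of P̂. -/
lemma phat_key
    (H : ∀ i : Fin m, Matrix (Fin q) (Fin (n i)) ℝ)
    (A : ∀ i : Fin m, Matrix (Fin p) (Fin (n i)) ℝ)
    (P : ∀ i : Fin m, Matrix (Fin (n i)) (Fin (n i)) ℝ)
    (W : Matrix (Fin m) (Fin m) ℝ) (u : Fin m → ℝ)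
    (β α : ℝ) (hβ : 0 ≤ β) (hα : 1 ≤ α)
    (Mhat : Matrix (Fin m) (Fin m) ℝ)
    (hM : Mhat = fun i j => W i j - u j + α * (u i * u j))
    (hPhat : ∀ v : ∀ i : Fin m, Fin (n i) → ℝ,
      0 ≤ normPSq P v - quadKron Mhat H v - β * quadKron Mhat A v)
    (v : ∀ i : Fin m, Fin (n i) → ℝ) :
    normVSq W u (fun i => H i *ᵥ v i)
        + (∑ j, u j • (H j *ᵥ v j)) ⬝ᵥ (∑ j, u j • (H j *ᵥ v j))
        + β * (normVSq W u (fun i => A i *ᵥ v i)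
          + (∑ j, u j • (A j *ᵥ v j)) ⬝ᵥ (∑ j, u j • (A j *ᵥ v j)))
      ≤ normPSq P v := by
  have key : ∀ (r : ℕ) (B : ∀ i : Fin m, Matrix (Fin r) (Fin (n i)) ℝ),
      quadKron Mhat B v = normVSq W u (fun i => B i *ᵥ v i)
        + α * ((∑ j, u j • (B j *ᵥ v j)) ⬝ᵥ (∑ j, u j • (B j *ᵥ v j))) := by
    intro r B
    rw [usum_sq]
    unfold quadKron normVSq
    rw [Finset.mul_sum, ← Finset.sum_add_distrib]
    apply Finset.sum_congr rfl; intro i _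
    rw [Finset.mul_sum, ← Finset.sum_add_distrib]
    apply Finset.sum_congr rfl; intro j _
    rw [hM]; ring
  have h := hPhat v
  rw [key q H, key p A] at h
  have h1 : 0 ≤ (∑ j, u j • (H j *ᵥ v j)) ⬝ᵥ (∑ j, u j • (H j *ᵥ v j)) := dot_self_nonneg' _
  have h2 : 0 ≤ (∑ j, u j • (A j *ᵥ v j)) ⬝ᵥ (∑ j, u j • (A j *ᵥ v j)) := dot_self_nonneg' _
  nlinarith [mul_nonneg hβ (mul_nonneg (by linarith : (0:ℝ) ≤ α - 1) h2)]

end step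
section step2
open Matrix Finset
variable {m q p : ℕ} {n : Fin m → ℕ}

lemma quad_three {r : ℕ} (P : Matrix (Fin r) (Fin r) ℝ) (hPs : Pᵀ = P)
    (x0 x1 xs : Fin r → ℝ) :
    (x1 - x0) ⬝ᵥ (P *ᵥ (xs - x1))
      = (1/2) * ((x0 - xs) ⬝ᵥ (P *ᵥ (x0 - xs)))
        - (1/2) * ((x1 - xs) ⬝ᵥ (P *ᵥ (x1 - xs)))
        - (1/2) * ((x1 - x0) ⬝ᵥ (P *ᵥ (x1 - x0))) := by
  simp only [Matrix.mulVec_sub, dotProduct_sub, sub_dotProduct]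
  rw [symdot P hPs x0 x1, symdot P hPs x0 xs, symdot P hPs x1 xs]
  ring

lemma lam_id {p : ℕ} (lam0 lamh R : Fin p → ℝ) {ρ : ℝ} (hρ : 0 < ρ) :
    lam0 ⬝ᵥ R = lamh ⬝ᵥ R
      + (1/2) * ((1/ρ) * ((lam0 - lamh) ⬝ᵥ (lam0 - lamh))
          - (1/ρ) * ((lam0 - ρ • R - lamh) ⬝ᵥ (lam0 - ρ • R - lamh)))
      + (ρ/2) * (R ⬝ᵥ R) := by
  simp only [sub_dotProduct, dotProduct_sub, smul_dotProduct, dotProduct_smul, smul_eq_mul]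
  rw [dotProduct_comm lamh lam0, dotProduct_comm R lam0, dotProduct_comm R lamh]
  field_simp
  ring

lemma step_ineq
    (H : ∀ i : Fin m, Matrix (Fin q) (Fin (n i)) ℝ)
    (A : ∀ i : Fin m, Matrix (Fin p) (Fin (n i)) ℝ)
    (b : Fin p → ℝ)
    (g : ∀ i : Fin m, (Fin (n i) → ℝ) → ℝ)
    (hg : ∀ i : Fin m, ConvexOn ℝ Set.univ (g i))
    (P : ∀ i : Fin m, Matrix (Fin (n i)) (Fin (n i)) ℝ)
    (hP : ∀ i : Fin m, (P i).PosSemidef)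
    (W : Matrix (Fin m) (Fin m) ℝ) (u : Fin m → ℝ)
    (hU : ∀ i j : Fin m, W i j - u j = W j i - u i)
    (β ρ α : ℝ) (hρ : 0 < ρ) (hβρ : ρ ≤ β) (hα : 1 ≤ α)
    (Mhat : Matrix (Fin m) (Fin m) ℝ)
    (hM : Mhat = fun i j => W i j - u j + α * (u i * u j))
    (hPhat : ∀ v : ∀ i : Fin m, Fin (n i) → ℝ,
      0 ≤ normPSq P v - quadKron Mhat H v - β * quadKron Mhat A v)
    (xstar : ∀ i : Fin m, Fin (n i) → ℝ)
    (hkkt1 : blkMulVec A xstar = b)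
    (x0 x1 : ∀ i : Fin m, Fin (n i) → ℝ) (lam0 lam1 : Fin p → ℝ)
    (hit : Iter H A b g P W β ρ x0 x1 lam0 lam1)
    (lamh : Fin p → ℝ) :
    Fobj H g x1 - Fobj H g xstar - lamh ⬝ᵥ (blkMulVec A x1 - b)
      ≤ (1/2) * (Phi H A P W u β ρ xstar lamh x0 lam0
          - Phi H A P W u β ρ xstar lamh x1 lam1) := by
  have hPs : ∀ i, (P i)ᵀ = P i := by
    intro i
    have h := (hP i).1
    rwa [Matrix.IsHermitian, Matrix.conjTranspose_eq_transpose_of_trivial] at h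
  -- per-block key inequality
  have keyA : ∀ i : Fin m,
      g i (x1 i) - g i (xstar i)
          + (blkMulVec H x1 ⬝ᵥ (H i *ᵥ (x1 i - xstar i)))
          - ((∑ j, W i j • (H j *ᵥ (x1 j - x0 j))) ⬝ᵥ (H i *ᵥ (x1 i - xstar i)))
          - (lam0 ⬝ᵥ (A i *ᵥ (x1 i - xstar i)))
          + β * ((blkMulVec A x1 - b) ⬝ᵥ (A i *ᵥ (x1 i - xstar i)))
          - β * ((∑ j, W i j • (A j *ᵥ (x1 j - x0 j))) ⬝ᵥ (A i *ᵥ (x1 i - xstar i)))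
        ≤ (1/2) * ((x0 i - xstar i) ⬝ᵥ (P i *ᵥ (x0 i - xstar i)))
          - (1/2) * ((x1 i - xstar i) ⬝ᵥ (P i *ᵥ (x1 i - xstar i)))
          - (1/2) * ((x1 i - x0 i) ⬝ᵥ (P i *ᵥ (x1 i - x0 i))) := by
    intro i
    set si : Fin (n i) → ℝ :=
      (H i)ᵀ *ᵥ blkMulVec H (xhat W x0 x1 i)
        - (A i)ᵀ *ᵥ (lam0 - β • (blkMulVec A (xhat W x0 x1 i) - b)) with hsi
    -- three-point inequality
    have three : g i (x1 i) - g i (xstar i) + (si ⬝ᵥ (x1 i - xstar i))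
        ≤ (x1 i - x0 i) ⬝ᵥ (P i *ᵥ (xstar i - x1 i)) := by
      have hvP : 0 ≤ (1/2) * ((xstar i - x1 i) ⬝ᵥ (P i *ᵥ (xstar i - x1 i))) := by
        have h := (hP i).dotProduct_mulVec_nonneg (xstar i - x1 i)
        simp only [star_trivial] at h
        linarith
      apply aux_theta hvP
      intro θ hθ0 hθ1
      have hxi := hit.1 i (x1 i + θ • (xstar i - x1 i))
      rw [← hsi] at hxi
      have hconv : g i (x1 i + θ • (xstar i - x1 i))
          ≤ (1 - θ) * g i (x1 i) + θ * g i (xstar i) := by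
        have hcomb : x1 i + θ • (xstar i - x1 i) = (1 - θ) • x1 i + θ • xstar i := by
          module
        rw [hcomb]
        exact (hg i).2 (Set.mem_univ _) (Set.mem_univ _) (by linarith) (le_of_lt hθ0)
          (by ring)
      have hquad : (x1 i + θ • (xstar i - x1 i) - x0 i)
            ⬝ᵥ (P i *ᵥ (x1 i + θ • (xstar i - x1 i) - x0 i))
          = (x1 i - x0 i) ⬝ᵥ (P i *ᵥ (x1 i - x0 i))
            + 2 * θ * ((x1 i - x0 i) ⬝ᵥ (P i *ᵥ (xstar i - x1 i)))
            + θ ^ 2 * ((xstar i - x1 i) ⬝ᵥ (P i *ᵥ (xstar i - x1 i))) := by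
        have harg : x1 i + θ • (xstar i - x1 i) - x0 i
            = (x1 i - x0 i) + θ • (xstar i - x1 i) := by module
        rw [harg, quad_exp (P i) (hPs i) _ _ θ]
      have hlin : si ⬝ᵥ (x1 i + θ • (xstar i - x1 i))
          = si ⬝ᵥ x1 i + θ * (si ⬝ᵥ (xstar i - x1 i)) := by
        rw [dotProduct_add, dotProduct_smul, smul_eq_mul]
      rw [hlin, hquad] at hxi
      have hsv : si ⬝ᵥ (x1 i - xstar i) = -(si ⬝ᵥ (xstar i - x1 i)) := by
        rw [dotProduct_sub, dotProduct_sub]; ring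
      rw [hsv]
      have hmain : θ * (g i (x1 i) - g i (xstar i) + -(si ⬝ᵥ (xstar i - x1 i)))
          ≤ θ * ((x1 i - x0 i) ⬝ᵥ (P i *ᵥ (xstar i - x1 i))
              + θ * ((1/2) * ((xstar i - x1 i) ⬝ᵥ (P i *ᵥ (xstar i - x1 i))))) := by
        nlinarith [hxi, hconv]
      exact le_of_mul_le_mul_left (by linarith [hmain]) hθ0
    -- rewrite si ⬝ᵥ (x1 i - xstar i)
    have hrw : si ⬝ᵥ (x1 i - xstar i)
        = (blkMulVec H x1 ⬝ᵥ (H i *ᵥ (x1 i - xstar i)))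
          - ((∑ j, W i j • (H j *ᵥ (x1 j - x0 j))) ⬝ᵥ (H i *ᵥ (x1 i - xstar i)))
          - (lam0 ⬝ᵥ (A i *ᵥ (x1 i - xstar i)))
          + β * ((blkMulVec A x1 - b) ⬝ᵥ (A i *ᵥ (x1 i - xstar i)))
          - β * ((∑ j, W i j • (A j *ᵥ (x1 j - x0 j))) ⬝ᵥ (A i *ᵥ (x1 i - xstar i))) := by
      rw [hsi, sub_dotProduct, tdot, tdot]
      rw [blkhat H W x0 x1 i, blkhat A W x0 x1 i]
      have h2 : blkMulVec A x1 - (∑ j, W i j • (A j *ᵥ (x1 j - x0 j))) - b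
          = (blkMulVec A x1 - b) - ∑ j, W i j • (A j *ᵥ (x1 j - x0 j)) := by abel
      rw [h2]
      simp only [sub_dotProduct, smul_dotProduct, smul_eq_mul]
      ring
    calc g i (x1 i) - g i (xstar i)
          + (blkMulVec H x1 ⬝ᵥ (H i *ᵥ (x1 i - xstar i)))
          - ((∑ j, W i j • (H j *ᵥ (x1 j - x0 j))) ⬝ᵥ (H i *ᵥ (x1 i - xstar i)))
          - (lam0 ⬝ᵥ (A i *ᵥ (x1 i - xstar i)))
          + β * ((blkMulVec A x1 - b) ⬝ᵥ (A i *ᵥ (x1 i - xstar i)))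
          - β * ((∑ j, W i j • (A j *ᵥ (x1 j - x0 j))) ⬝ᵥ (A i *ᵥ (x1 i - xstar i)))
        = g i (x1 i) - g i (xstar i) + (si ⬝ᵥ (x1 i - xstar i)) := by rw [hrw]; ring
      _ ≤ (x1 i - x0 i) ⬝ᵥ (P i *ᵥ (xstar i - x1 i)) := three
      _ = _ := quad_three (P i) (hPs i) (x0 i) (x1 i) (xstar i)

  -- funext equalities
  have haA : ((fun i : Fin m => H i *ᵥ (x1 i - xstar i)) - fun j => H j *ᵥ (x1 j - x0 j))
      = fun i => H i *ᵥ (x0 i - xstar i) := by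
    funext i
    show H i *ᵥ (x1 i - xstar i) - H i *ᵥ (x1 i - x0 i) = H i *ᵥ (x0 i - xstar i)
    rw [← Matrix.mulVec_sub]
    congr 1
    abel
  have hcA : ((fun i : Fin m => A i *ᵥ (x1 i - xstar i)) - fun j => A j *ᵥ (x1 j - x0 j))
      = fun i => A i *ᵥ (x0 i - xstar i) := by
    funext i
    show A i *ᵥ (x1 i - xstar i) - A i *ᵥ (x1 i - x0 i) = A i *ᵥ (x0 i - xstar i)
    rw [← Matrix.mulVec_sub]
    congr 1
    abel
  have sAc : blkMulVec A x1 - b = ∑ i, A i *ᵥ (x1 i - xstar i) := by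
    rw [← hkkt1]; exact blk_sub A x1 xstar
  -- summed inequality
  have SUM := Finset.sum_le_sum (fun i (_ : i ∈ Finset.univ) => keyA i)
  simp only [Finset.sum_add_distrib, Finset.sum_sub_distrib, ← Finset.mul_sum] at SUM
  -- identities for sums
  have SY : ∑ i, blkMulVec H x1 ⬝ᵥ (H i *ᵥ (x1 i - xstar i))
      = blkMulVec H x1 ⬝ᵥ (blkMulVec H x1 - blkMulVec H xstar) := by
    rw [blk_sub, dot_sum']
  have SL : ∑ i, lam0 ⬝ᵥ (A i *ᵥ (x1 i - xstar i)) = lam0 ⬝ᵥ (blkMulVec A x1 - b) := by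
    rw [sAc, dot_sum']
  have SR : ∑ i, (blkMulVec A x1 - b) ⬝ᵥ (A i *ᵥ (x1 i - xstar i))
      = (blkMulVec A x1 - b) ⬝ᵥ (blkMulVec A x1 - b) := by
    calc ∑ i, (blkMulVec A x1 - b) ⬝ᵥ (A i *ᵥ (x1 i - xstar i))
        = (blkMulVec A x1 - b) ⬝ᵥ (∑ i, A i *ᵥ (x1 i - xstar i)) := (dot_sum' _ _ _).symm
      _ = _ := by rw [← sAc]
  have S4y : ∑ i, ((∑ j, W i j • (H j *ᵥ (x1 j - x0 j))) ⬝ᵥ (H i *ᵥ (x1 i - xstar i)))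
      = (1/2) * normVSq W u (fun i => H i *ᵥ (x1 i - xstar i))
        + (1/2) * normVSq W u (fun j => H j *ᵥ (x1 j - x0 j))
        - (1/2) * normVSq W u (fun i => H i *ᵥ (x0 i - xstar i))
        + (∑ j, u j • (H j *ᵥ (x1 j - x0 j)))
            ⬝ᵥ (blkMulVec H x1 - blkMulVec H xstar) := by
    have e1 : ∑ i, ((∑ j, W i j • (H j *ᵥ (x1 j - x0 j))) ⬝ᵥ (H i *ᵥ (x1 i - xstar i)))
        = ∑ i, ∑ j, W i j * ((H j *ᵥ (x1 j - x0 j)) ⬝ᵥ (H i *ᵥ (x1 i - xstar i))) := by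
      apply Finset.sum_congr rfl; intro i _
      rw [sum_dot']
      apply Finset.sum_congr rfl; intro j _
      rw [smul_dotProduct, smul_eq_mul]
    have e2 := wsplit W u (fun j => H j *ᵥ (x1 j - x0 j)) (fun i => H i *ᵥ (x1 i - xstar i))
    try simp only [] at e2
    have e3 := normVSq_sub W u hU (fun i => H i *ᵥ (x1 i - xstar i))
        (fun j => H j *ᵥ (x1 j - x0 j))
    rw [haA] at e3
    try simp only [] at e3
    rw [e1, e2, blk_sub]
    linear_combination (1/2) * e3
  have S4z : ∑ i, ((∑ j, W i j • (A j *ᵥ (x1 j - x0 j))) ⬝ᵥ (A i *ᵥ (x1 i - xstar i)))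
      = (1/2) * normVSq W u (fun i => A i *ᵥ (x1 i - xstar i))
        + (1/2) * normVSq W u (fun j => A j *ᵥ (x1 j - x0 j))
        - (1/2) * normVSq W u (fun i => A i *ᵥ (x0 i - xstar i))
        + (∑ j, u j • (A j *ᵥ (x1 j - x0 j))) ⬝ᵥ (blkMulVec A x1 - b) := by
    have e1 : ∑ i, ((∑ j, W i j • (A j *ᵥ (x1 j - x0 j))) ⬝ᵥ (A i *ᵥ (x1 i - xstar i)))
        = ∑ i, ∑ j, W i j * ((A j *ᵥ (x1 j - x0 j)) ⬝ᵥ (A i *ᵥ (x1 i - xstar i))) := by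
      apply Finset.sum_congr rfl; intro i _
      rw [sum_dot']
      apply Finset.sum_congr rfl; intro j _
      rw [smul_dotProduct, smul_eq_mul]
    have e2 := wsplit W u (fun j => A j *ᵥ (x1 j - x0 j)) (fun i => A i *ᵥ (x1 i - xstar i))
    try simp only [] at e2
    have e3 := normVSq_sub W u hU (fun i => A i *ᵥ (x1 i - xstar i))
        (fun j => A j *ᵥ (x1 j - x0 j))
    rw [hcA] at e3
    try simp only [] at e3
    rw [e1, e2, sAc]
    linear_combination (1/2) * e3
  rw [SY, SL, SR, S4y, S4z] at SUM
  -- normPSq sums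
  have hnp0 : ∑ i, ((x0 i - xstar i) ⬝ᵥ (P i *ᵥ (x0 i - xstar i))) = normPSq P (x0 - xstar) :=
    rfl
  have hnp1 : ∑ i, ((x1 i - xstar i) ⬝ᵥ (P i *ᵥ (x1 i - xstar i))) = normPSq P (x1 - xstar) :=
    rfl
  have hnpd : ∑ i, ((x1 i - x0 i) ⬝ᵥ (P i *ᵥ (x1 i - x0 i))) = normPSq P (x1 - x0) := rfl
  rw [hnp0, hnp1, hnpd] at SUM
  -- lambda identity
  have I6 : lam0 ⬝ᵥ (blkMulVec A x1 - b)
      = lamh ⬝ᵥ (blkMulVec A x1 - b)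
        + (1/2) * ((1/ρ) * ((lam0 - lamh) ⬝ᵥ (lam0 - lamh))
            - (1/ρ) * ((lam1 - lamh) ⬝ᵥ (lam1 - lamh)))
        + (ρ/2) * ((blkMulVec A x1 - b) ⬝ᵥ (blkMulVec A x1 - b)) := by
    have h := lam_id lam0 lamh (blkMulVec A x1 - b) hρ
    rw [← hit.2] at h
    exact h
  -- F objective identity
  have I10 : Fobj H g x1 - Fobj H g xstar
      = blkMulVec H x1 ⬝ᵥ (blkMulVec H x1 - blkMulVec H xstar)
        - (1/2) * ((blkMulVec H x1 - blkMulVec H xstar)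
            ⬝ᵥ (blkMulVec H x1 - blkMulVec H xstar))
        + ((∑ i, g i (x1 i)) - ∑ i, g i (xstar i)) := by
    unfold Fobj
    simp only [dotProduct_sub, sub_dotProduct]
    rw [dotProduct_comm (blkMulVec H xstar) (blkMulVec H x1)]
    ring
  -- Young inequalities
  have young1 := yng (∑ j, u j • (H j *ᵥ (x1 j - x0 j)))
      (blkMulVec H x1 - blkMulVec H xstar)
  have young2 : β * ((∑ j, u j • (A j *ᵥ (x1 j - x0 j))) ⬝ᵥ (blkMulVec A x1 - b))
      ≤ β * ((1/2) * ((blkMulVec A x1 - b) ⬝ᵥ (blkMulVec A x1 - b))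
        + (1/2) * ((∑ j, u j • (A j *ᵥ (x1 j - x0 j)))
            ⬝ᵥ (∑ j, u j • (A j *ᵥ (x1 j - x0 j))))) :=
    mul_le_mul_of_nonneg_left (yng _ _) (by linarith)
  -- P-hat bound
  have hpk := phat_key H A P W u β α (by linarith) hα Mhat hM hPhat (x1 - x0)
  simp only [Pi.sub_apply] at hpk
  have hrr : 0 ≤ (β - ρ) * ((blkMulVec A x1 - b) ⬝ᵥ (blkMulVec A x1 - b)) :=
    mul_nonneg (by linarith) (dot_self_nonneg' _)
  simp only [Phi]
  linarith [SUM, I6, I10, young1, young2, hpk, hrr]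


end step2
section outer
open Matrix Finset
variable {m q p : ℕ} {n : Fin m → ℕ}

lemma tele_sum (f : ℕ → ℝ) (t : ℕ) :
    ∑ k ∈ Finset.Icc 1 t, (f k - f (k+1)) = f 1 - f (t+1) := by
  induction t with
  | zero => simp
  | succ t ih =>
      rw [Finset.sum_Icc_succ_top (by omega : 1 ≤ t + 1), ih]
      ring

lemma mulVec_sumv {r s : ℕ} {ι : Type*} (sf : Finset ι) (M : Matrix (Fin r) (Fin s) ℝ)
    (f : ι → Fin s → ℝ) : M *ᵥ (∑ i ∈ sf, f i) = ∑ i ∈ sf, M *ᵥ f i := by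
  funext k
  simp only [Matrix.mulVec, dotProduct, Finset.sum_apply, Finset.mul_sum]
  exact Finset.sum_comm

lemma quad_convexOn {r : ℕ} : ConvexOn ℝ Set.univ (fun v : Fin r → ℝ => v ⬝ᵥ v) := by
  constructor
  · exact convex_univ
  · intro x _ y _ a b ha hb hab
    have hxy : (x - y) ⬝ᵥ (x - y) = x ⬝ᵥ x - x ⬝ᵥ y - x ⬝ᵥ y + y ⬝ᵥ y := by
      simp only [sub_dotProduct, dotProduct_sub]
      rw [dotProduct_comm y x]; ring
    have hxy0 := dot_self_nonneg' (x - y)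
    have hexp : (a • x + b • y) ⬝ᵥ (a • x + b • y)
        = a^2 * (x ⬝ᵥ x) + 2*a*b * (x ⬝ᵥ y) + b^2 * (y ⬝ᵥ y) := by
      simp only [add_dotProduct, dotProduct_add, smul_dotProduct, dotProduct_smul, smul_eq_mul]
      rw [dotProduct_comm y x]; ring
    simp only [smul_eq_mul]
    rw [hexp]
    have hb' : b = 1 - a := by linarith
    subst hb'
    nlinarith [mul_nonneg (mul_nonneg ha hb) hxy0, hxy]

lemma enormE_sq (v : Fin r → ℝ) : enormE v ^ 2 = v ⬝ᵥ v := by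
  rw [enormE, Real.sq_sqrt (dot_self_nonneg' v)]

lemma enormE_nonneg' (v : Fin r → ℝ) : 0 ≤ enormE v := Real.sqrt_nonneg _

lemma neg_cs (v w : Fin r → ℝ) : -(enormE v * enormE w) ≤ v ⬝ᵥ w := by
  have h := cs_dot (-v) w
  have h2 : (-v) ⬝ᵥ (-v) = v ⬝ᵥ v := by
    simp [neg_dotProduct, dotProduct_neg]
  rw [neg_dotProduct] at h
  rw [h2] at h
  have : Real.sqrt (v ⬝ᵥ v) = enormE v := rfl
  rw [this] at h
  have : Real.sqrt (w ⬝ᵥ w) = enormE w := rfl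
  rw [this] at h
  linarith

lemma cs_enormE (v w : Fin r → ℝ) : v ⬝ᵥ w ≤ enormE v * enormE w := cs_dot v w

end outer
/-- Theorem 1 (sublinear convergence rate), estimates (20). -/
theorem stmt_11 {m q p : ℕ} {n : Fin m → ℕ}
    (H : ∀ i : Fin m, Matrix (Fin q) (Fin (n i)) ℝ)
    (A : ∀ i : Fin m, Matrix (Fin p) (Fin (n i)) ℝ)
    (b : Fin p → ℝ)
    (g : ∀ i : Fin m, (Fin (n i) → ℝ) → ℝ)
    (hg : ∀ i : Fin m, ConvexOn ℝ Set.univ (g i))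
    (P : ∀ i : Fin m, Matrix (Fin (n i)) (Fin (n i)) ℝ)
    (hP : ∀ i : Fin m, (P i).PosSemidef)
    (W : Matrix (Fin m) (Fin m) ℝ) (u : Fin m → ℝ)
    (hW : ∀ i j : Fin m, i ≤ j → W i j = 1)              -- w_{ij} = 1 for j ≥ i
    (hU : ∀ i j : Fin m, W i j - u j = W j i - u i)       -- U := W − euᵀ symmetric
    (β ρ α : ℝ) (hρ : 0 < ρ) (hβρ : ρ ≤ β) (hα : 1 ≤ α)
    (x : ℕ → ∀ i : Fin m, Fin (n i) → ℝ) (lam : ℕ → Fin p → ℝ)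
    (hiter : ∀ k : ℕ, 1 ≤ k →
      Iter H A b g P W β ρ (x k) (x (k + 1)) (lam k) (lam (k + 1)))
    (hlam1 : lam 1 = 0)
    (Mhat : Matrix (Fin m) (Fin m) ℝ)
    (hM : Mhat = fun i j => W i j - u j + α * (u i * u j))
    -- P̂ := P − D_Hᵀ(M ⊗ I)D_H − β D_Aᵀ(M ⊗ I)D_A is positive semidefinite:
    (hPhat : ∀ v : ∀ i : Fin m, Fin (n i) → ℝ,
      0 ≤ normPSq P v - quadKron Mhat H v - β * quadKron Mhat A v)
    -- (x*, λ*) satisfies the KKT conditions: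
    (xstar : ∀ i : Fin m, Fin (n i) → ℝ) (lamstar : Fin p → ℝ)
    (hkkt1 : blkMulVec A xstar = b)
    (hkkt2 : ∀ xx : ∀ i : Fin m, Fin (n i) → ℝ,
      Fobj H g xstar + ∑ i, ((A i)ᵀ *ᵥ lamstar) ⬝ᵥ (xx i - xstar i) ≤ Fobj H g xx)
    (C : ℝ)
    (hC : C = (1 / ρ) * max ((1 + enormE lamstar) ^ 2) (4 * enormE lamstar ^ 2)
        + normPSq P (x 1 - xstar)
        - normVSq W u ((fun i => H i *ᵥ (x 1) i) - fun i => H i *ᵥ xstar i)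
        - β * normVSq W u ((fun i => A i *ᵥ (x 1) i) - fun i => A i *ᵥ xstar i)) :
    ∀ t : ℕ, 1 ≤ t →
      ∀ xbar : ∀ i : Fin m, Fin (n i) → ℝ,
        xbar = (fun i => (1 / (t : ℝ)) • ∑ k ∈ Finset.Icc 1 t, x (k + 1) i) →
        |Fobj H g xbar - Fobj H g xstar| ≤ C / (2 * t)
          ∧ enormE (blkMulVec A xbar - b) ≤ C / (2 * t) := by
  intro t ht xbar hxbar
  have hβ : (0:ℝ) ≤ β := le_of_lt (lt_of_lt_of_le hρ hβρ)
  have hN : (0:ℝ) < (t:ℝ) := by exact_mod_cast Nat.lt_of_lt_of_le Nat.zero_lt_one ht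
  have hNne : ((t:ℝ)) ≠ 0 := ne_of_gt hN
  have hcard : (Finset.Icc 1 t).card = t := by rw [Nat.card_Icc]; omega
  -- weights
  have wnn : ∀ k ∈ Finset.Icc 1 t, (0:ℝ) ≤ 1/(t:ℝ) := fun _ _ => by positivity
  have wsum : ∑ _k ∈ Finset.Icc 1 t, (1/(t:ℝ)) = 1 := by
    rw [Finset.sum_const, hcard, nsmul_eq_mul]
    field_simp
  -- block linearity of xbar
  have hblk : ∀ (r : ℕ) (B : ∀ i : Fin m, Matrix (Fin r) (Fin (n i)) ℝ),
      blkMulVec B xbar = (1/(t:ℝ)) • ∑ k ∈ Finset.Icc 1 t, blkMulVec B (x (k+1)) := by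
    intro r B
    rw [hxbar]
    unfold blkMulVec
    have e1 : ∀ i : Fin m, B i *ᵥ ((1/(t:ℝ)) • ∑ k ∈ Finset.Icc 1 t, x (k+1) i)
        = (1/(t:ℝ)) • ∑ k ∈ Finset.Icc 1 t, B i *ᵥ x (k+1) i := by
      intro i
      rw [Matrix.mulVec_smul, mulVec_sumv]
    simp only [e1]
    rw [← Finset.smul_sum, Finset.sum_comm]
  have hs : blkMulVec A xbar - b
      = (1/(t:ℝ)) • ∑ k ∈ Finset.Icc 1 t, (blkMulVec A (x (k+1)) - b) := by
    rw [hblk p A, Finset.sum_sub_distrib, Finset.sum_const, hcard, smul_sub]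
    congr 1
    rw [← Nat.cast_smul_eq_nsmul ℝ t b, smul_smul]
    rw [one_div, inv_mul_cancel₀ hNne, one_smul]
  -- Jensen for Fobj
  have hYb : blkMulVec H xbar = ∑ k ∈ Finset.Icc 1 t, (1/(t:ℝ)) • blkMulVec H (x (k+1)) := by
    rw [hblk q H, Finset.smul_sum]
  have hquadJ : blkMulVec H xbar ⬝ᵥ blkMulVec H xbar
      ≤ ∑ k ∈ Finset.Icc 1 t,
          (1/(t:ℝ)) * (blkMulVec H (x (k+1)) ⬝ᵥ blkMulVec H (x (k+1))) := by
    rw [hYb]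
    have := quad_convexOn.map_sum_le wnn wsum
      (fun (k : ℕ) (_ : k ∈ Finset.Icc 1 t) => Set.mem_univ (blkMulVec H (x (k+1))))
    simpa using this
  have hgJ : ∀ i, g i (xbar i) ≤ ∑ k ∈ Finset.Icc 1 t, (1/(t:ℝ)) * g i (x (k+1) i) := by
    intro i
    have hx : xbar i = ∑ k ∈ Finset.Icc 1 t, (1/(t:ℝ)) • x (k+1) i := by
      rw [hxbar]; exact Finset.smul_sum
    rw [hx]
    have := (hg i).map_sum_le wnn wsum
      (fun (k : ℕ) (_ : k ∈ Finset.Icc 1 t) => Set.mem_univ (x (k+1) i))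
    simpa using this
  have hFJ : Fobj H g xbar ≤ (1/(t:ℝ)) * ∑ k ∈ Finset.Icc 1 t, Fobj H g (x (k+1)) := by
    unfold Fobj
    have h1 : (1/2) * (blkMulVec H xbar ⬝ᵥ blkMulVec H xbar) + ∑ i, g i (xbar i)
        ≤ (1/2) * (∑ k ∈ Finset.Icc 1 t,
              (1/(t:ℝ)) * (blkMulVec H (x (k+1)) ⬝ᵥ blkMulVec H (x (k+1))))
          + ∑ i, ∑ k ∈ Finset.Icc 1 t, (1/(t:ℝ)) * g i (x (k+1) i) := by
      have := Finset.sum_le_sum (fun i (_ : i ∈ Finset.univ) => hgJ i)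
      linarith [hquadJ]
    have h2 : (1/2) * (∑ k ∈ Finset.Icc 1 t,
            (1/(t:ℝ)) * (blkMulVec H (x (k+1)) ⬝ᵥ blkMulVec H (x (k+1))))
          + ∑ i, ∑ k ∈ Finset.Icc 1 t, (1/(t:ℝ)) * g i (x (k+1) i)
        = (1/(t:ℝ)) * ∑ k ∈ Finset.Icc 1 t,
            ((1/2) * (blkMulVec H (x (k+1)) ⬝ᵥ blkMulVec H (x (k+1)))
              + ∑ i, g i (x (k+1) i)) := by
      rw [Finset.sum_comm (s := Finset.univ) (t := Finset.Icc 1 t)]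
      rw [Finset.mul_sum, Finset.mul_sum, ← Finset.sum_add_distrib]
      apply Finset.sum_congr rfl
      intro k _
      rw [← Finset.mul_sum]
      ring
    linarith [h1, h2.le, h2.ge]
  -- the master bound
  have hmaster : ∀ lamh : Fin p → ℝ,
      Fobj H g xbar - Fobj H g xstar - lamh ⬝ᵥ (blkMulVec A xbar - b)
        ≤ (1/(2*(t:ℝ))) * (normPSq P (x 1 - xstar)
            - normVSq W u (fun i => H i *ᵥ (x 1 i - xstar i))
            - β * normVSq W u (fun i => A i *ᵥ (x 1 i - xstar i))
            + (1/ρ) * (lamh ⬝ᵥ lamh)) := by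
    intro lamh
    have hstep : ∀ k ∈ Finset.Icc 1 t,
        Fobj H g (x (k+1)) - Fobj H g xstar - lamh ⬝ᵥ (blkMulVec A (x (k+1)) - b)
          ≤ (1/2) * (Phi H A P W u β ρ xstar lamh (x k) (lam k)
              - Phi H A P W u β ρ xstar lamh (x (k+1)) (lam (k+1))) := by
      intro k hk
      exact step_ineq H A b g hg P hP W u hU β ρ α hρ hβρ hα Mhat hM hPhat xstar hkkt1
        (x k) (x (k+1)) (lam k) (lam (k+1)) (hiter k (Finset.mem_Icc.mp hk).1) lamh
    have hsum := Finset.sum_le_sum hstep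
    rw [← Finset.mul_sum,
      tele_sum (fun k => Phi H A P W u β ρ xstar lamh (x k) (lam k)) t] at hsum
    -- nonnegativity of Phi at t+1
    have hPt : 0 ≤ Phi H A P W u β ρ xstar lamh (x (t+1)) (lam (t+1)) := by
      unfold Phi
      have h := phat_key H A P W u β α hβ hα Mhat hM hPhat (x (t+1) - xstar)
      simp only [Pi.sub_apply] at h
      have h1 := dot_self_nonneg' (∑ j, u j • (H j *ᵥ (x (t+1) j - xstar j)))
      have h2 := dot_self_nonneg' (∑ j, u j • (A j *ᵥ (x (t+1) j - xstar j)))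
      have h3 : 0 ≤ (1/ρ) * ((lam (t+1) - lamh) ⬝ᵥ (lam (t+1) - lamh)) :=
        mul_nonneg (by positivity) (dot_self_nonneg' _)
      have h4 : 0 ≤ β * ((∑ j, u j • (A j *ᵥ (x (t+1) j - xstar j)))
          ⬝ᵥ (∑ j, u j • (A j *ᵥ (x (t+1) j - xstar j)))) := mul_nonneg hβ h2
      linarith [h, h1, h3, h4]
    -- expand the sum
    have expand : ∑ k ∈ Finset.Icc 1 t,
        (Fobj H g (x (k+1)) - Fobj H g xstar - lamh ⬝ᵥ (blkMulVec A (x (k+1)) - b))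
        = (∑ k ∈ Finset.Icc 1 t, Fobj H g (x (k+1))) - (t:ℝ) * Fobj H g xstar
          - ∑ k ∈ Finset.Icc 1 t, lamh ⬝ᵥ (blkMulVec A (x (k+1)) - b) := by
      rw [Finset.sum_sub_distrib, Finset.sum_sub_distrib, Finset.sum_const, hcard,
        nsmul_eq_mul]
    have hlamlin : lamh ⬝ᵥ (blkMulVec A xbar - b)
        = (1/(t:ℝ)) * ∑ k ∈ Finset.Icc 1 t, lamh ⬝ᵥ (blkMulVec A (x (k+1)) - b) := by
      rw [hs, dotProduct_smul, smul_eq_mul, dot_sum']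
    have hPhi1 : Phi H A P W u β ρ xstar lamh (x 1) (lam 1)
        = normPSq P (x 1 - xstar)
            - normVSq W u (fun i => H i *ᵥ (x 1 i - xstar i))
            - β * normVSq W u (fun i => A i *ᵥ (x 1 i - xstar i))
            + (1/ρ) * (lamh ⬝ᵥ lamh) := by
      unfold Phi
      rw [hlam1]
      congr 2
      rw [zero_sub, neg_dotProduct, dotProduct_neg, neg_neg]
    calc Fobj H g xbar - Fobj H g xstar - lamh ⬝ᵥ (blkMulVec A xbar - b)
        ≤ (1/(t:ℝ)) * ∑ k ∈ Finset.Icc 1 t,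
            (Fobj H g (x (k+1)) - Fobj H g xstar - lamh ⬝ᵥ (blkMulVec A (x (k+1)) - b)) := by
          rw [expand, hlamlin]
          rw [mul_sub, mul_sub]
          have : (1/(t:ℝ)) * ((t:ℝ) * Fobj H g xstar) = Fobj H g xstar := by
            field_simp
          rw [this]
          have := mul_le_mul_of_nonneg_left hFJ (le_of_lt (one_div_pos.mpr hN))
          linarith [hFJ]
      _ ≤ (1/(t:ℝ)) * ((1/2) * (Phi H A P W u β ρ xstar lamh (x 1) (lam 1)
            - Phi H A P W u β ρ xstar lamh (x (t+1)) (lam (t+1)))) :=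
          mul_le_mul_of_nonneg_left hsum (by positivity)
      _ ≤ (1/(2*(t:ℝ))) * Phi H A P W u β ρ xstar lamh (x 1) (lam 1) := by
          have h2N : (0:ℝ) ≤ 1/(2*(t:ℝ)) := by positivity
          have e : (1/(t:ℝ)) * ((1/2) * (Phi H A P W u β ρ xstar lamh (x 1) (lam 1)
              - Phi H A P W u β ρ xstar lamh (x (t+1)) (lam (t+1))))
              = (1/(2*(t:ℝ))) * Phi H A P W u β ρ xstar lamh (x 1) (lam 1)
                - (1/(2*(t:ℝ))) * Phi H A P W u β ρ xstar lamh (x (t+1)) (lam (t+1)) := by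
            field_simp
          rw [e]
          nlinarith [mul_nonneg h2N hPt]
      _ = _ := by rw [hPhi1]

  -- abbreviations (plain haves)
  have hf1 : ((fun i => H i *ᵥ x 1 i) - fun i => H i *ᵥ xstar i)
      = fun i => H i *ᵥ (x 1 i - xstar i) := by
    funext i
    show H i *ᵥ x 1 i - H i *ᵥ xstar i = H i *ᵥ (x 1 i - xstar i)
    exact (Matrix.mulVec_sub _ _ _).symm
  have hf2 : ((fun i => A i *ᵥ x 1 i) - fun i => A i *ᵥ xstar i)
      = fun i => A i *ᵥ (x 1 i - xstar i) := by
    funext i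
    show A i *ᵥ x 1 i - A i *ᵥ xstar i = A i *ᵥ (x 1 i - xstar i)
    exact (Matrix.mulVec_sub _ _ _).symm
  rw [hf1, hf2] at hC
  have hPhi0nn : 0 ≤ normPSq P (x 1 - xstar)
      - normVSq W u (fun i => H i *ᵥ (x 1 i - xstar i))
      - β * normVSq W u (fun i => A i *ᵥ (x 1 i - xstar i)) := by
    have h := phat_key H A P W u β α hβ hα Mhat hM hPhat (x 1 - xstar)
    simp only [Pi.sub_apply] at h
    have h1 := dot_self_nonneg' (∑ j, u j • (H j *ᵥ (x 1 j - xstar j)))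
    have h2 := dot_self_nonneg' (∑ j, u j • (A j *ᵥ (x 1 j - xstar j)))
    have h4 : 0 ≤ β * ((∑ j, u j • (A j *ᵥ (x 1 j - xstar j)))
        ⬝ᵥ (∑ j, u j • (A j *ᵥ (x 1 j - xstar j)))) := mul_nonneg hβ h2
    linarith [h, h1, h4]
  have hMx0 : (0:ℝ) ≤ max ((1 + enormE lamstar) ^ 2) (4 * enormE lamstar ^ 2) :=
    le_trans (sq_nonneg _) (le_max_left _ _)
  have hrMx : (0:ℝ) ≤ (1/ρ) * max ((1 + enormE lamstar) ^ 2) (4 * enormE lamstar ^ 2) :=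
    mul_nonneg (by positivity) hMx0
  have hC0 : 0 ≤ C := by rw [hC]; linarith [hPhi0nn, hrMx]
  have h2t : (0:ℝ) < 2 * (t:ℝ) := by positivity
  have h2tn : (0:ℝ) ≤ 1/(2*(t:ℝ)) := by positivity
  -- upper bound via lamh = 0
  have hupper : Fobj H g xbar - Fobj H g xstar ≤ C / (2 * (t:ℝ)) := by
    have h0 := hmaster 0
    rw [zero_dotProduct, dotProduct_zero] at h0
    have hle : normPSq P (x 1 - xstar)
        - normVSq W u (fun i => H i *ᵥ (x 1 i - xstar i))
        - β * normVSq W u (fun i => A i *ᵥ (x 1 i - xstar i)) + (1/ρ) * 0 ≤ C := by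
      rw [hC]; linarith [hrMx]
    have h2 := mul_le_mul_of_nonneg_left hle h2tn
    have e2 : (1/(2*(t:ℝ))) * C = C / (2*(t:ℝ)) := by ring
    linarith [h0, h2, e2.le, e2.ge]
  -- lower bound via KKT
  have hlow : -(enormE lamstar * enormE (blkMulVec A xbar - b))
      ≤ Fobj H g xbar - Fobj H g xstar := by
    have h := hkkt2 xbar
    have hsum : ∑ i, ((A i)ᵀ *ᵥ lamstar) ⬝ᵥ (xbar i - xstar i)
        = lamstar ⬝ᵥ (blkMulVec A xbar - b) := by
      have e : ∀ i : Fin m, ((A i)ᵀ *ᵥ lamstar) ⬝ᵥ (xbar i - xstar i)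
          = lamstar ⬝ᵥ (A i *ᵥ (xbar i - xstar i)) := fun i => tdot _ _ _
      simp only [e]
      rw [← dot_sum', ← blk_sub, hkkt1]
    rw [hsum] at h
    have hneg := neg_cs lamstar (blkMulVec A xbar - b)
    linarith [h, hneg]
  -- case split on the residual
  rcases eq_or_lt_of_le (enormE_nonneg' (blkMulVec A xbar - b)) with hns | hns
  · -- residual zero
    constructor
    · rw [abs_le]
      constructor
      · have : (0:ℝ) ≤ C / (2 * (t:ℝ)) := div_nonneg hC0 (le_of_lt h2t)
        rw [← hns] at hlow
        simp only [mul_zero, neg_zero] at hlow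
        linarith
      · exact hupper
    · rw [← hns]
      exact div_nonneg hC0 (le_of_lt h2t)
  · -- residual positive
    have hnsne : enormE (blkMulVec A xbar - b) ≠ 0 := ne_of_gt hns
    have hss : (blkMulVec A xbar - b) ⬝ᵥ (blkMulVec A xbar - b)
        = enormE (blkMulVec A xbar - b) ^ 2 := (enormE_sq _).symm
    have hL0 : 0 ≤ enormE lamstar := enormE_nonneg' _
    -- generic bound for scaled dual choices
    have key : ∀ c : ℝ, 0 ≤ c →
        Fobj H g xbar - Fobj H g xstar + c * enormE (blkMulVec A xbar - b)
          ≤ (1/(2*(t:ℝ))) * (normPSq P (x 1 - xstar)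
              - normVSq W u (fun i => H i *ᵥ (x 1 i - xstar i))
              - β * normVSq W u (fun i => A i *ᵥ (x 1 i - xstar i))
              + (1/ρ) * c ^ 2) := by
      intro c hc
      have hB := hmaster (-((c / enormE (blkMulVec A xbar - b)) • (blkMulVec A xbar - b)))
      have c1 : (-((c / enormE (blkMulVec A xbar - b)) • (blkMulVec A xbar - b)))
          ⬝ᵥ (blkMulVec A xbar - b) = -(c * enormE (blkMulVec A xbar - b)) := by
        rw [neg_dotProduct, smul_dotProduct, smul_eq_mul, hss]
        field_simp
      have c2 : (-((c / enormE (blkMulVec A xbar - b)) • (blkMulVec A xbar - b)))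
          ⬝ᵥ (-((c / enormE (blkMulVec A xbar - b)) • (blkMulVec A xbar - b))) = c ^ 2 := by
        rw [neg_dotProduct, dotProduct_neg, neg_neg, smul_dotProduct, dotProduct_smul,
          smul_eq_mul, smul_eq_mul, hss]
        field_simp
      rw [c1, c2] at hB
      linarith [hB]
    have monoMx : ∀ c : ℝ, c ^ 2 ≤ max ((1 + enormE lamstar) ^ 2) (4 * enormE lamstar ^ 2) →
        (1/(2*(t:ℝ))) * (normPSq P (x 1 - xstar)
            - normVSq W u (fun i => H i *ᵥ (x 1 i - xstar i))
            - β * normVSq W u (fun i => A i *ᵥ (x 1 i - xstar i))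
            + (1/ρ) * c ^ 2) ≤ C / (2 * (t:ℝ)) := by
      intro c hcM
      have h1 : (1/ρ) * c ^ 2
          ≤ (1/ρ) * max ((1 + enormE lamstar) ^ 2) (4 * enormE lamstar ^ 2) :=
        mul_le_mul_of_nonneg_left hcM (by positivity)
      have h2 := mul_le_mul_of_nonneg_left (by linarith [h1] :
          normPSq P (x 1 - xstar)
            - normVSq W u (fun i => H i *ᵥ (x 1 i - xstar i))
            - β * normVSq W u (fun i => A i *ᵥ (x 1 i - xstar i)) + (1/ρ) * c ^ 2 ≤ C) h2tn
      calc (1/(2*(t:ℝ))) * _ ≤ (1/(2*(t:ℝ))) * C := h2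
        _ = C / (2 * (t:ℝ)) := by ring
    -- choice 1 : c = 1 + ‖λ*‖
    have hb1 := le_trans (key (1 + enormE lamstar) (by linarith))
      (monoMx (1 + enormE lamstar) (le_max_left _ _))
    -- choice 2 : c = 2‖λ*‖
    have hb2 := le_trans (key (2 * enormE lamstar) (by linarith))
      (monoMx (2 * enormE lamstar) (by
        have : (2 * enormE lamstar) ^ 2 = 4 * enormE lamstar ^ 2 := by ring
        rw [this]
        exact le_max_right _ _))
    constructor
    · rw [abs_le]
      refine ⟨?_, hupper⟩
      linarith [hb2, hlow]
    · linarith [hb1, hlow]
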